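/- arXiv:math/9506202 — 3 statements merged into one kernel-verified Lean document; each statement's English description precedes it below -/
import Mathlib

section
/- If a formal power series u(x,y) in two variables is invariant under both τ₁*(x,y)=(-x,-2x+y) and τ₂*(x,y)=(-x,2x+y) (i.e., u∘τ₁* = u and u∘τ₂* = u), then u depends only on x and contains only even powers of x; in particular if additionally u(x,0) = -u(-x,0), then u = 0. -/
open MvPowerSeries

/-- Composition `u ∘ τ` of a formal power series `u(x,y) ∈ ℂ[[x,y]]` with the linear map
`τ(x,y) = (e·x, c·x + y)`, defined coefficientwise:
the coefficient of `x^M y^K` in `u(ex, cx+y)` is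
`Σ_{t=0}^{M} e^{M-t} c^t C(K+t, t) · u_{M-t, K+t}`. -/
noncomputable def compLin (e c : ℂ) (u : MvPowerSeries (Fin 2) ℂ) :
    MvPowerSeries (Fin 2) ℂ :=
  fun m => ∑ t ∈ Finset.range (m 0 + 1),
    e ^ (m 0 - t) * c ^ t * ((m 1 + t).choose t : ℂ) *
      MvPowerSeries.coeff (Finsupp.single 0 (m 0 - t) + Finsupp.single 1 (m 1 + t)) u

/-- The coefficient `u_{M,K}` of `x^M y^K` in `u`. -/
noncomputable def Dc (u : MvPowerSeries (Fin 2) ℂ) (M K : ℕ) : ℂ :=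
  MvPowerSeries.coeff (Finsupp.single 0 M + Finsupp.single 1 K) u

lemma Dc_def (u : MvPowerSeries (Fin 2) ℂ) (M K : ℕ) :
    Dc u M K = MvPowerSeries.coeff (Finsupp.single 0 M + Finsupp.single 1 K) u := rfl

lemma msplit (m : Fin 2 →₀ ℕ) : m = Finsupp.single 0 (m 0) + Finsupp.single 1 (m 1) := by
  ext i; fin_cases i <;> simp [Finsupp.single_apply]

lemma eq_coeff (u : MvPowerSeries (Fin 2) ℂ) (e c : ℂ) (h : compLin e c u = u) (M K : ℕ) :
    ∑ t ∈ Finset.range (M+1),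
      e ^ (M - t) * c ^ t * ((K + t).choose t : ℂ) * Dc u (M - t) (K + t) = Dc u M K := by
  have h' := congrFun h (Finsupp.single 0 M + Finsupp.single 1 K)
  have h0 : ((Finsupp.single (0 : Fin 2) M + Finsupp.single 1 K : Fin 2 →₀ ℕ)) 0 = M := by
    simp [Finsupp.single_apply]
  have h1 : ((Finsupp.single (0 : Fin 2) M + Finsupp.single 1 K : Fin 2 →₀ ℕ)) 1 = K := by
    simp [Finsupp.single_apply]
  simp only [compLin, h0, h1] at h'
  exact h'

/-- The invariances force `u` to be independent of `y`: all coefficients `u_{M,K}` with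
`K ≥ 1` vanish. -/
lemma Dzero (u : MvPowerSeries (Fin 2) ℂ)
    (h1 : compLin (-1) (-2) u = u) (h2 : compLin (-1) 2 u = u) :
    ∀ M K : ℕ, Dc u M (K+1) = 0 := by
  intro M
  induction M using Nat.strong_induction_on with
  | _ M IH =>
    intro K
    have e1 := eq_coeff u _ _ h1 (M+1) K
    have e2 := eq_coeff u _ _ h2 (M+1) K
    have hsum : ∑ t ∈ Finset.range (M+2),
        ((-1:ℂ)^(M+1-t) * 2^t - (-1:ℂ)^(M+1-t) * (-2)^t) * ((K+t).choose t : ℂ)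
          * Dc u (M+1-t) (K+t) = 0 := by
      have : ∑ t ∈ Finset.range (M+2),
          ((-1:ℂ)^(M+1-t) * 2^t - (-1:ℂ)^(M+1-t) * (-2)^t) * ((K+t).choose t : ℂ)
            * Dc u (M+1-t) (K+t)
          = (∑ t ∈ Finset.range (M+1+1),
              (-1:ℂ)^(M+1-t) * 2^t * ((K+t).choose t : ℂ) * Dc u (M+1-t) (K+t))
            - ∑ t ∈ Finset.range (M+1+1),
              (-1:ℂ)^(M+1-t) * (-2)^t * ((K+t).choose t : ℂ) * Dc u (M+1-t) (K+t) := by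
        rw [← Finset.sum_sub_distrib]
        apply Finset.sum_congr rfl
        intro t _; ring
      rw [this, e1, e2, sub_self]
    rw [Finset.sum_eq_single_of_mem 1 (by simp)] at hsum
    · have hK : ((K:ℂ)+1) ≠ 0 := by
        have := Nat.cast_add_one_ne_zero (R := ℂ) K
        exact_mod_cast this
      have hc : ((-1:ℂ)^(M+1-1) * 2^1 - (-1:ℂ)^(M+1-1) * (-2)^1) * ((K+1).choose 1 : ℂ) ≠ 0 := by
        simp only [Nat.add_sub_cancel, Nat.choose_one_right, pow_one]
        push_cast
        intro hzero
        rcases mul_eq_zero.mp hzero with h | h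
        · have : (-1:ℂ)^M * 4 = 0 := by linear_combination h
          rcases mul_eq_zero.mp this with h' | h'
          · exact pow_ne_zero M (by norm_num) h'
          · norm_num at h'
        · exact hK h
      have := mul_eq_zero.mp hsum
      rcases this with h | h
      · exact absurd h hc
      · exact h
    · intro b hb hb1
      match b with
      | 0 => simp
      | 1 => exact absurd rfl hb1
      | (s+2) =>
        have hb' : s + 2 < M + 2 := Finset.mem_range.mp hb
        have hlt : M + 1 - (s+2) < M := by omega
        have hKrw : K + (s+2) = (K+s+1) + 1 := by ring
        rw [hKrw, IH _ hlt (K+s+1), mul_zero]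

/-- The invariances force vanishing of all coefficients `u_{M,0}` with `M` odd. -/
lemma Dodd (u : MvPowerSeries (Fin 2) ℂ)
    (h1 : compLin (-1) (-2) u = u) (h2 : compLin (-1) 2 u = u) :
    ∀ M : ℕ, Odd M → Dc u M 0 = 0 := by
  intro M hM
  have e2 := eq_coeff u _ _ h2 M 0
  rw [Finset.sum_eq_single_of_mem 0 (by simp)] at e2
  · simp only [Nat.sub_zero, pow_zero, Nat.add_zero, Nat.zero_add, Nat.choose_self,
      mul_one, Nat.cast_one] at e2
    rw [hM.neg_one_pow] at e2
    have : Dc u M (0+0) = Dc u M 0 := by norm_num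
    rw [this] at e2
    linear_combination (-1/2 : ℂ) * e2
  · intro b hb hb0
    match b with
    | 0 => exact absurd rfl hb0
    | (s+1) =>
      have : (0 : ℕ) + (s+1) = s + 1 := by ring
      rw [this, Dzero u h1 h2, mul_zero]

/-- If a formal power series `u(x,y) ∈ ℂ[[x,y]]` is invariant under both
`τ₁*(x,y) = (-x, -2x+y)` and `τ₂*(x,y) = (-x, 2x+y)` (i.e. `u∘τ₁* = u` and `u∘τ₂* = u`),
then `u` depends only on `x` and contains only even powers of `x`; in particular, if
additionally `u(x,0) = -u(-x,0)` (coefficientwise: `u_{i,0} = -(-1)^i u_{i,0}`),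
then `u = 0`. -/
theorem stmt_7 (u : MvPowerSeries (Fin 2) ℂ)
    (h1 : compLin (-1) (-2) u = u) (h2 : compLin (-1) 2 u = u) :
    (∀ m : Fin 2 →₀ ℕ, MvPowerSeries.coeff m u ≠ 0 → m 1 = 0 ∧ Even (m 0)) ∧
    ((∀ i : ℕ, MvPowerSeries.coeff (Finsupp.single 0 i) u =
        -((-1 : ℂ) ^ i * MvPowerSeries.coeff (Finsupp.single 0 i) u)) → u = 0) := by
  have hcoeff : ∀ m : Fin 2 →₀ ℕ, MvPowerSeries.coeff m u = Dc u (m 0) (m 1) := by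
    intro m; rw [Dc_def]; exact congrArg (MvPowerSeries.coeff · u) (msplit m)
  have hD1 : ∀ M : ℕ, Dc u M 0 = 0 ∨ Even M := by
    intro M
    rcases Nat.even_or_odd M with h | h
    · exact Or.inr h
    · exact Or.inl (Dodd u h1 h2 M h)
  constructor
  · intro m hm
    rw [hcoeff m] at hm
    have hK : m 1 = 0 := by
      by_contra h
      obtain ⟨k, hk⟩ : ∃ k, m 1 = k + 1 := ⟨m 1 - 1, by omega⟩
      rw [hk, Dzero u h1 h2] at hm
      exact hm rfl
    refine ⟨hK, ?_⟩
    rw [hK] at hm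
    rcases hD1 (m 0) with h | h
    · exact absurd h hm
    · exact h
  · intro hp
    ext m
    rw [map_zero, hcoeff m]
    rcases Nat.eq_zero_or_pos (m 1) with hK | hK
    · rw [hK]
      rcases hD1 (m 0) with h | h
      · exact h
      · have := hp (m 0)
        have hsingle : MvPowerSeries.coeff (Finsupp.single 0 (m 0)) u = Dc u (m 0) 0 := by
          rw [Dc_def, Finsupp.single_zero, add_zero]
        rw [hsingle, h.neg_one_pow, one_mul] at this
        linear_combination (1/2 : ℂ) * this
    · obtain ⟨k, hk⟩ : ∃ k, m 1 = k + 1 := ⟨m 1 - 1, by omega⟩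
      rw [hk]; exact Dzero u h1 h2 _ _
end

section
/- The injectivity of the linearized operator: if formal power series u, v in (x,y) satisfy u∘τ₁* + u = 0, v∘τ₁* - v + 2u = 0, u∘τ₂* + u = 0, v∘τ₂* - v - 2u = 0, together with the normalization u(0,y) = 0, u(x,0) = u(-x,0), v(x,0) = -v(-x,0), then u = 0 and v = 0. -/
open MvPowerSeries

/-- The exponent vector `x^i y^j`. -/
noncomputable def Mvec (i j : ℕ) : Fin 2 →₀ ℕ :=
  Finsupp.single 0 i + Finsupp.single 1 j

lemma Mvec_apply0 (i j : ℕ) : Mvec i j 0 = i := by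
  simp [Mvec, Finsupp.single_apply]

lemma Mvec_apply1 (i j : ℕ) : Mvec i j 1 = j := by
  simp [Mvec, Finsupp.single_apply]

lemma Mvec_eq (m : Fin 2 →₀ ℕ) : m = Mvec (m 0) (m 1) := by
  ext a
  fin_cases a
  · simp [Mvec, Finsupp.single_apply]
  · simp [Mvec, Finsupp.single_apply]

lemma coeff_compLin (e c : ℂ) (u : MvPowerSeries (Fin 2) ℂ) (i j : ℕ) :
    MvPowerSeries.coeff (Mvec i j) (compLin e c u) =
      ∑ t ∈ Finset.range (i + 1),
        e ^ (i - t) * c ^ t * ((j + t).choose t : ℂ) *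
          MvPowerSeries.coeff (Mvec (i - t) (j + t)) u := by
  rw [MvPowerSeries.coeff_apply]
  show (∑ t ∈ Finset.range (Mvec i j 0 + 1),
    e ^ (Mvec i j 0 - t) * c ^ t * ((Mvec i j 1 + t).choose t : ℂ) *
      MvPowerSeries.coeff
        (Finsupp.single 0 (Mvec i j 0 - t) + Finsupp.single 1 (Mvec i j 1 + t)) u) = _
  rw [Mvec_apply0, Mvec_apply1]
  rfl

/-- The common induction engine along diagonals. -/
lemma core (W : ℕ → ℕ → ℂ) (ε : ℂ) (hε : ε = 1 ∨ ε = -1)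
    (heqp : ∀ i j : ℕ,
      (∑ t ∈ Finset.range (i + 1),
        (-1 : ℂ) ^ (i - t) * (2 : ℂ) ^ t * ((j + t).choose t : ℂ) * W (i - t) (j + t))
        + ε * W i j = 0)
    (heqm : ∀ i j : ℕ,
      (∑ t ∈ Finset.range (i + 1),
        (-1 : ℂ) ^ (i - t) * (-2 : ℂ) ^ t * ((j + t).choose t : ℂ) * W (i - t) (j + t))
        + ε * W i j = 0)
    (hbase : ∀ i : ℕ, (-1 : ℂ) ^ i = -ε → W i 0 = 0) :
    ∀ i j : ℕ, W i j = 0 := by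
  have hε0 : ε ≠ 0 := by rcases hε with h | h <;> rw [h] <;> norm_num
  intro i
  induction i using Nat.strong_induction_on with
  | _ i IH =>
    intro j
    have hs : (-1 : ℂ) ^ i = 1 ∨ (-1 : ℂ) ^ i = -1 := by
      rcases Nat.even_or_odd i with h | h
      · exact Or.inl h.neg_one_pow
      · exact Or.inr h.neg_one_pow
    by_cases hcase : (-1 : ℂ) ^ i = ε
    · -- equation at (i, j) directly gives (ε + ε) W i j = 0
      have h := heqp i j
      rw [Finset.sum_range_succ'] at h
      have hz : ∀ t ∈ Finset.range i,
          (-1 : ℂ) ^ (i - (t + 1)) * (2 : ℂ) ^ (t + 1) * ((j + (t + 1)).choose (t + 1) : ℂ)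
            * W (i - (t + 1)) (j + (t + 1)) = 0 := by
        intro t ht
        have ht' := Finset.mem_range.mp ht
        rw [IH _ (by omega) _]
        ring
      rw [Finset.sum_eq_zero hz] at h
      simp only [Nat.sub_zero, pow_zero, mul_one, Nat.add_zero, Nat.choose_zero_right,
        Nat.cast_one, zero_add, one_mul] at h
      rw [hcase] at h
      have h2 : (ε + ε) * W i j = 0 := by linear_combination h
      have h3 : (ε + ε) ≠ 0 := by rcases hε with h' | h' <;> rw [h'] <;> norm_num
      exact (mul_eq_zero.mp h2).resolve_left h3
    · -- bad parity: (-1)^i = -ε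
      have hcase' : (-1 : ℂ) ^ i = -ε := by
        rcases hs with h | h <;> rcases hε with h' | h' <;> simp_all
      cases j with
      | zero => exact hbase i hcase'
      | succ k =>
        have reduce : ∀ c : ℂ,
            (∑ t ∈ Finset.range (i + 1 + 1),
              (-1 : ℂ) ^ (i + 1 - t) * c ^ t * ((k + t).choose t : ℂ) * W (i + 1 - t) (k + t))
            = (-1 : ℂ) ^ (i + 1) * W (i + 1) k
              + (-1 : ℂ) ^ i * c * ((k : ℂ) + 1) * W i (k + 1) := by
          intro c
          rw [Finset.sum_range_succ', Finset.sum_range_succ']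
          have hz : ∀ t ∈ Finset.range i,
              (-1 : ℂ) ^ (i + 1 - (t + 1 + 1)) * c ^ (t + 1 + 1) *
                ((k + (t + 1 + 1)).choose (t + 1 + 1) : ℂ) * W (i + 1 - (t + 1 + 1)) (k + (t + 1 + 1)) = 0 := by
            intro t ht
            have ht' := Finset.mem_range.mp ht
            rw [IH _ (by omega) _]
            ring
          rw [Finset.sum_eq_zero hz]
          have e1 : i + 1 - (0 + 1) = i := by omega
          have e2 : i + 1 - 0 = i + 1 := by omega
          rw [e1, e2]
          have e3 : (k + (0 + 1)).choose (0 + 1) = k + 1 := by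
            simp [Nat.choose_one_right]
          rw [e3]
          simp only [Nat.add_zero, Nat.choose_zero_right, Nat.cast_one, pow_zero, pow_one,
            zero_add]
          push_cast
          ring
        have hp := heqp (i + 1) k
        have hm := heqm (i + 1) k
        rw [reduce 2] at hp
        rw [reduce (-2)] at hm
        have key : (-1 : ℂ) ^ i * 4 * ((k : ℂ) + 1) * W i (k + 1) = 0 := by
          linear_combination hp - hm
        have h4 : (-1 : ℂ) ^ i * 4 * ((k : ℂ) + 1) ≠ 0 := by
          rw [hcase']
          exact mul_ne_zero (mul_ne_zero (by simpa using hε0) (by norm_num))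
            (Nat.cast_add_one_ne_zero k)
        exact (mul_eq_zero.mp key).resolve_left h4

/-- Injectivity of the linearized operator.  If formal power series
`u, v ∈ ℂ[[x,y]]` satisfy `u∘τ₁* + u = 0`, `v∘τ₁* - v + 2u = 0`, `u∘τ₂* + u = 0`,
`v∘τ₂* - v - 2u = 0` (where `τ₁*(x,y) = (-x,-2x+y)`, `τ₂*(x,y) = (-x,2x+y)`),
together with the normalization `u(0,y) = 0`, `u(x,0) = u(-x,0)`,
`v(x,0) = -v(-x,0)`, then `u = 0` and `v = 0`. -/
theorem stmt_10 (u v : MvPowerSeries (Fin 2) ℂ)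
    (e1 : compLin (-1) (-2) u + u = 0)
    (e2 : compLin (-1) (-2) v - v + 2 * u = 0)
    (e3 : compLin (-1) 2 u + u = 0)
    (e4 : compLin (-1) 2 v - v - 2 * u = 0)
    (n1 : ∀ m : Fin 2 →₀ ℕ, m 0 = 0 → MvPowerSeries.coeff m u = 0)
    (n2 : ∀ i : ℕ, MvPowerSeries.coeff (Finsupp.single 0 i) u =
        (-1 : ℂ) ^ i * MvPowerSeries.coeff (Finsupp.single 0 i) u)
    (n3 : ∀ i : ℕ, MvPowerSeries.coeff (Finsupp.single 0 i) v =
        -((-1 : ℂ) ^ i * MvPowerSeries.coeff (Finsupp.single 0 i) v)) :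
    u = 0 ∧ v = 0 := by
  have Mvec0 : ∀ i : ℕ, Mvec i 0 = Finsupp.single 0 i := by
    intro i; simp [Mvec]
  -- u part
  have h1 : ∀ i j : ℕ,
      (∑ t ∈ Finset.range (i + 1),
        (-1 : ℂ) ^ (i - t) * (2 : ℂ) ^ t * ((j + t).choose t : ℂ) *
          MvPowerSeries.coeff (Mvec (i - t) (j + t)) u)
        + (1 : ℂ) * MvPowerSeries.coeff (Mvec i j) u = 0 := by
    intro i j
    have h := congrArg (MvPowerSeries.coeff (Mvec i j)) e3
    rw [map_add, map_zero, coeff_compLin] at h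
    linear_combination h
  have h2 : ∀ i j : ℕ,
      (∑ t ∈ Finset.range (i + 1),
        (-1 : ℂ) ^ (i - t) * (-2 : ℂ) ^ t * ((j + t).choose t : ℂ) *
          MvPowerSeries.coeff (Mvec (i - t) (j + t)) u)
        + (1 : ℂ) * MvPowerSeries.coeff (Mvec i j) u = 0 := by
    intro i j
    have h := congrArg (MvPowerSeries.coeff (Mvec i j)) e1
    rw [map_add, map_zero, coeff_compLin] at h
    linear_combination h
  have h3 : ∀ i : ℕ, (-1 : ℂ) ^ i = -(1 : ℂ) →
      MvPowerSeries.coeff (Mvec i 0) u = 0 := by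
    intro i hi
    rw [Mvec0]
    have h := n2 i
    rw [hi] at h
    have h2' : (2 : ℂ) * MvPowerSeries.coeff (Finsupp.single 0 i) u = 0 := by
      linear_combination h
    exact (mul_eq_zero.mp h2').resolve_left (by norm_num)
  have hU : ∀ i j : ℕ, MvPowerSeries.coeff (Mvec i j) u = 0 :=
    core (fun i j => MvPowerSeries.coeff (Mvec i j) u) 1 (Or.inl rfl) h1 h2 h3
  have hu : u = 0 := by
    apply MvPowerSeries.ext
    intro m
    rw [map_zero, Mvec_eq m]
    exact hU _ _
  refine ⟨hu, ?_⟩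
  rw [hu] at e2 e4
  rw [mul_zero, add_zero] at e2
  rw [mul_zero, sub_zero] at e4
  have g1 : ∀ i j : ℕ,
      (∑ t ∈ Finset.range (i + 1),
        (-1 : ℂ) ^ (i - t) * (2 : ℂ) ^ t * ((j + t).choose t : ℂ) *
          MvPowerSeries.coeff (Mvec (i - t) (j + t)) v)
        + (-1 : ℂ) * MvPowerSeries.coeff (Mvec i j) v = 0 := by
    intro i j
    have h := congrArg (MvPowerSeries.coeff (Mvec i j)) e4
    rw [map_sub, map_zero, coeff_compLin] at h
    linear_combination h
  have g2 : ∀ i j : ℕ,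
      (∑ t ∈ Finset.range (i + 1),
        (-1 : ℂ) ^ (i - t) * (-2 : ℂ) ^ t * ((j + t).choose t : ℂ) *
          MvPowerSeries.coeff (Mvec (i - t) (j + t)) v)
        + (-1 : ℂ) * MvPowerSeries.coeff (Mvec i j) v = 0 := by
    intro i j
    have h := congrArg (MvPowerSeries.coeff (Mvec i j)) e2
    rw [map_sub, map_zero, coeff_compLin] at h
    linear_combination h
  have g3 : ∀ i : ℕ, (-1 : ℂ) ^ i = -(-1 : ℂ) →
      MvPowerSeries.coeff (Mvec i 0) v = 0 := by
    intro i hi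
    rw [Mvec0]
    have h := n3 i
    rw [show ((-1 : ℂ) ^ i = 1) from by rw [hi]; ring] at h
    have h2' : (2 : ℂ) * MvPowerSeries.coeff (Finsupp.single 0 i) v = 0 := by
      linear_combination h
    exact (mul_eq_zero.mp h2').resolve_left (by norm_num)
  have hV : ∀ i j : ℕ, MvPowerSeries.coeff (Mvec i j) v = 0 :=
    core (fun i j => MvPowerSeries.coeff (Mvec i j) v) (-1) (Or.inr rfl) g1 g2 g3
  apply MvPowerSeries.ext
  intro m
  rw [map_zero, Mvec_eq m]
  exact hV _ _
end

section
/- Abstract solvability of the linearized equation: Let X = ⊕_{k≥1} X_k, Y = ⊕_{k≥1} Y_k, Z = ⊕_{k≥1} Z_k be graded real vector spaces (each summand finite-dimensional), and F : X × Y → Z with F(0,0)=0. Suppose DF(x,y) = D₁F(x) + D₂F(y) is linear and homogeneous (maps X_k × Y_k to Z_k), the quadratic remainder QF = F - DF satisfies π_k QF(x,y) = π_k QF([x]_{k-1}, [y]_{k-1}) for all k, there is a solution operator P : X → Y with F(x, P(x)) = 0 and P(0)=0, and D₂F : Y → Z is injective. Then L(x) := Σ_k π_k P(x_k) solves DF(x,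 L(x)) = 0 for all x ∈ X, and the remainder P̃ = P - L satisfies π_k P̃(x) = π_k P̃([x]_{k-1}) for all k. -/
open DFinsupp

/-- abstract solvability of the linearized equation.  Let
`X = ⊕_{k≥1} X_k`, `Y = ⊕_{k≥1} Y_k`, `Z = ⊕_{k≥1} Z_k` be graded real vector spaces
with finite-dimensional graded pieces (modelled as `Π₀ k, X_k` over `ℕ`, with trivial
pieces in degree `0`), and let `F : X × Y → Z` with `F(0,0) = 0`.  Suppose the
derivative `DF(x,y) = D₁F(x) + D₂F(y)` is linear and homogeneous — i.e. given by
degreewise linear maps `D₁ : X_k →ₗ Z_k`, `D₂ : Y_k →ₗ Z_k` — that the remainder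
`QF = F - DF` satisfies `π_k QF(x,y) = π_k QF([x]_{k-1}, [y]_{k-1})` for all `k`
(where `[x]_j` is the truncation to degrees `≤ j` and `π_k` the `k`-th projection),
that there is a solution operator `P : X → Y` with `F(x, P(x)) = 0` and `P(0) = 0`,
and that `D₂F` is injective.  Then `L(x) := Σ_k π_k P(x_k)` satisfies
`DF(x, L(x)) = 0` for every `x ∈ X`, and the remainder `P̃ = P - L` satisfies
`π_k P̃(x) = π_k P̃([x]_{k-1})` for all `k`. -/
theorem stmt_18
    (Xk Yk Zk : ℕ → Type)
    [∀ k, AddCommGroup (Xk k)] [∀ k, Module ℝ (Xk k)] [∀ k, FiniteDimensional ℝ (Xk k)]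
    [∀ k, AddCommGroup (Yk k)] [∀ k, Module ℝ (Yk k)] [∀ k, FiniteDimensional ℝ (Yk k)]
    [∀ k, AddCommGroup (Zk k)] [∀ k, Module ℝ (Zk k)] [∀ k, FiniteDimensional ℝ (Zk k)]
    [Subsingleton (Xk 0)] [Subsingleton (Yk 0)] [Subsingleton (Zk 0)]
    (F : (Π₀ k, Xk k) → (Π₀ k, Yk k) → (Π₀ k, Zk k))
    (D1 : ∀ k, Xk k →ₗ[ℝ] Zk k) (D2 : ∀ k, Yk k →ₗ[ℝ] Zk k)
    (DF : (Π₀ k, Xk k) → (Π₀ k, Yk k) → (Π₀ k, Zk k))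
    (hDF : ∀ x y, DF x y =
      DFinsupp.mapRange (fun k => D1 k) (fun k => (D1 k).map_zero) x +
      DFinsupp.mapRange (fun k => D2 k) (fun k => (D2 k).map_zero) y)
    (hF0 : F 0 0 = 0)
    (hQ : ∀ (x : Π₀ k, Xk k) (y : Π₀ k, Yk k) (k : ℕ),
      (F x y - DF x y) k =
      (F (x.filter (· ≤ k - 1)) (y.filter (· ≤ k - 1)) -
        DF (x.filter (· ≤ k - 1)) (y.filter (· ≤ k - 1))) k)
    (P : (Π₀ k, Xk k) → (Π₀ k, Yk k))
    (hP : ∀ x, F x (P x) = 0) (hP0 : P 0 = 0)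
    (hD2 : ∀ k, Function.Injective (D2 k)) :
    ∃ L : (Π₀ k, Xk k) → (Π₀ k, Yk k),
      (∀ (x : Π₀ k, Xk k) (k : ℕ), L x k = P (DFinsupp.single k (x k)) k) ∧
      (∀ x : Π₀ k, Xk k, DF x (L x) = 0) ∧
      (∀ (x : Π₀ k, Xk k) (k : ℕ),
        (P x - L x) k = (P (x.filter (· ≤ k - 1)) - L (x.filter (· ≤ k - 1))) k) := by
  classical
  -- pointwise formula for DF
  have hDFk : ∀ x y (k : ℕ), DF x y k = D1 k (x k) + D2 k (y k) := by
    intro x y k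
    rw [hDF]
    simp [DFinsupp.add_apply, DFinsupp.mapRange_apply]
  have hDF00 : DF 0 0 = 0 := by
    ext k; rw [hDFk]; simp
  -- key identity from F(x, P x) = 0 and hQ
  have key : ∀ (k : ℕ) (x : Π₀ k, Xk k),
      D1 k (x k) + D2 k ((P x) k) +
        (F (x.filter (· ≤ k - 1)) ((P x).filter (· ≤ k - 1)) -
          DF (x.filter (· ≤ k - 1)) ((P x).filter (· ≤ k - 1))) k = 0 := by
    intro k x
    have h0 : (F x (P x)) k = 0 := by rw [hP x]; rfl
    have hd := hDFk x (P x) k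
    have hq := hQ x (P x) k
    rw [← hq, DFinsupp.sub_apply, h0, hd]
    abel
  -- P x k depends only on x in degrees ≤ k
  have claim : ∀ (k : ℕ) (x x' : Π₀ k, Xk k), (∀ j ≤ k, x j = x' j) → P x k = P x' k := by
    intro k
    induction k using Nat.strong_induction_on with
    | _ k IH =>
      intro x x' h
      rcases Nat.eq_zero_or_pos k with hk | hk
      · subst hk; exact Subsingleton.elim _ _
      · have hxf : x.filter (· ≤ k - 1) = x'.filter (· ≤ k - 1) := by
          ext j
          rw [DFinsupp.filter_apply, DFinsupp.filter_apply]
          split_ifs with hj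
          · exact h j (le_trans hj (Nat.sub_le k 1))
          · rfl
        have hyf : (P x).filter (· ≤ k - 1) = (P x').filter (· ≤ k - 1) := by
          ext j
          rw [DFinsupp.filter_apply, DFinsupp.filter_apply]
          split_ifs with hj
          · exact IH j (lt_of_le_of_lt hj (Nat.sub_lt hk one_pos)) x x'
              (fun i hi => h i (le_trans hi (le_trans hj (Nat.sub_le k 1))))
          · rfl
        have e1 := key k x
        have e2 := key k x'
        rw [← hxf, ← hyf, ← h k le_rfl] at e2
        exact hD2 k (add_left_cancel (add_right_cancel (e1.trans e2.symm)))
  -- single k v truncated below k is 0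
  have hsz : ∀ (k : ℕ) (v : Xk k) (i : ℕ), i ≤ k - 1 →
      (DFinsupp.single k v) i = (0 : Π₀ k, Xk k) i := by
    intro k v i hi
    rcases eq_or_ne k i with rfl | hne
    · have hk0 : k = 0 := by omega
      subst hk0
      exact Subsingleton.elim _ _
    · rw [DFinsupp.single_eq_of_ne hne.symm]; rfl
  have hsf : ∀ (k : ℕ) (v : Xk k),
      (DFinsupp.single k v).filter (· ≤ k - 1) = 0 := by
    intro k v
    ext j
    rw [DFinsupp.filter_apply]
    split_ifs with hj
    · exact hsz k v j hj
    · rfl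
  -- P(single k v) truncated below k is 0
  have hpsf : ∀ (k : ℕ) (v : Xk k),
      (P (DFinsupp.single k v)).filter (· ≤ k - 1) = 0 := by
    intro k v
    ext j
    rw [DFinsupp.filter_apply]
    split_ifs with hj
    · have : P (DFinsupp.single k v) j = P 0 j :=
        claim j (DFinsupp.single k v) 0 (fun i hi => hsz k v i (le_trans hi hj))
      rw [this, hP0]
    · rfl
  -- the degreewise linearized equation for singles
  have hsingle : ∀ (k : ℕ) (v : Xk k),
      D1 k v + D2 k ((P (DFinsupp.single k v)) k) = 0 := by
    intro k v
    have e := key k (DFinsupp.single k v)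
    rw [hsf k v, hpsf k v, DFinsupp.single_eq_same] at e
    rw [hF0, hDF00, sub_zero] at e
    simpa using e
  -- define L
  have hLk : ∀ (x : Π₀ k, Xk k) (k : ℕ),
      (DFinsupp.mk x.support (fun k => P (DFinsupp.single k.1 (x k.1)) k.1)) k
        = P (DFinsupp.single k (x k)) k := by
    intro x k
    by_cases hk : k ∈ x.support
    · rw [DFinsupp.mk_apply, dif_pos hk]
    · rw [DFinsupp.mk_apply, dif_neg hk]
      have hx : x k = 0 := by
        by_contra hne
        exact hk (DFinsupp.mem_support_iff.mpr hne)
      rw [hx, DFinsupp.single_zero, hP0]; rfl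
  refine ⟨fun x => DFinsupp.mk x.support (fun k => P (DFinsupp.single k.1 (x k.1)) k.1),
    fun x k => hLk x k, ?_, ?_⟩
  · -- DF x (L x) = 0
    intro x
    ext k
    rw [hDFk, hLk x k, DFinsupp.zero_apply]
    exact hsingle k (x k)
  · -- remainder property
    intro x k
    have hff : (x.filter (· ≤ k - 1)).filter (· ≤ k - 1) = x.filter (· ≤ k - 1) := by
      ext j
      by_cases hj : j ≤ k - 1 <;> simp [DFinsupp.filter_apply, hj]
    have hpf : (P (x.filter (· ≤ k - 1))).filter (· ≤ k - 1)
        = (P x).filter (· ≤ k - 1) := by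
      ext j
      rw [DFinsupp.filter_apply, DFinsupp.filter_apply]
      split_ifs with hj
      · exact claim j (x.filter (· ≤ k - 1)) x
          (fun i hi => by
            rw [DFinsupp.filter_apply, if_pos (le_trans hi hj)])
      · rfl
    have e1 := key k x
    have e2 := key k (x.filter (· ≤ k - 1))
    rw [hff, hpf] at e2
    rw [DFinsupp.sub_apply, DFinsupp.sub_apply, hLk, hLk]
    apply hD2 k
    rw [map_sub, map_sub,
      eq_neg_of_add_eq_zero_right (hsingle k (x k)),
      eq_neg_of_add_eq_zero_right (hsingle k ((x.filter (· ≤ k - 1)) k)),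
      sub_neg_eq_add, sub_neg_eq_add]
    have h12 := (eq_neg_of_add_eq_zero_left e1).trans
      (eq_neg_of_add_eq_zero_left e2).symm
    calc D2 k (P x k) + D1 k (x k)
        = D1 k (x k) + D2 k (P x k) := add_comm _ _
      _ = D1 k ((x.filter (· ≤ k - 1)) k) + D2 k (P (x.filter (· ≤ k - 1)) k) := h12
      _ = D2 k (P (x.filter (· ≤ k - 1)) k) + D1 k ((x.filter (· ≤ k - 1)) k) := add_comm _ _
end
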